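/- For every positive integer n, the fugacity partition function of staircase tableaux at q = 1 and y = 1 factors as Z_n(1; α, β, γ, δ; 1) = ∏_{j=0}^{n−1} (α + β + γ + δ + j(α+γ)(β+δ)), as an identity in the polynomial ring ℤ[α, β, γ, δ]. -/

import Mathlib

inductive SLetter : Type
  | A | B | G | D
deriving DecidableEq, Repr

instance instFintypeSLetter : Fintype SLetter where
  elems := {SLetter.A, SLetter.B, SLetter.G, SLetter.D}
  complete := fun x => by cases x <;> simp

/-- A filling `T` of the staircase Young diagram of shape `(n, n-1, …, 1)`
(boxes `(i,j)` with `i + j < n`, row `i` from the top, column `j` from the left,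
diagonal boxes those with `i + j + 1 = n`) is a staircase tableau if:
boxes outside the shape are unused (empty); no diagonal box is empty;
all boxes to the left of a `β` or `δ` in its row are empty;
all boxes above an `α` or `γ` in its column are empty. -/
def IsStaircase (n : ℕ) (T : Fin n → Fin n → Option SLetter) : Prop :=
  (∀ i j : Fin n, n ≤ (i : ℕ) + (j : ℕ) → T i j = none) ∧
  (∀ i j : Fin n, (i : ℕ) + (j : ℕ) + 1 = n → T i j ≠ none) ∧
  (∀ i j j' : Fin n, j' < j → (T i j = some SLetter.B ∨ T i j = some SLetter.D) →
      T i j' = none) ∧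
  (∀ i i' j : Fin n, i' < i → (T i j = some SLetter.A ∨ T i j = some SLetter.G) →
      T i' j = none)

instance (n : ℕ) : DecidablePred (IsStaircase n) := fun T => by
  unfold IsStaircase; infer_instance

/-- The staircase tableaux of size `n`. -/
def StaircaseTableau (n : ℕ) : Type :=
  {T : Fin n → Fin n → Option SLetter // IsStaircase n T}

instance (n : ℕ) : Fintype (StaircaseTableau n) := Subtype.fintype _

instance (n : ℕ) : DecidableEq (StaircaseTableau n) := Subtype.instDecidableEq

/-- The number of boxes of `T` filled with the symbol `x`. -/
def countLetter (n : ℕ) (T : Fin n → Fin n → Option SLetter) (x : SLetter) : ℕ :=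
  (Finset.univ.filter (fun p : Fin n × Fin n => T p.1 p.2 = some x)).card

/-- The label of the nearest labeled box strictly to the right of `(i,j)` in row `i`. -/
def rightLabel (n : ℕ) (T : Fin n → Fin n → Option SLetter) (i j : Fin n) : Option SLetter :=
  List.findSome? (fun j' => T i j') ((List.finRange n).drop ((j : ℕ) + 1))

/-- The label of the nearest labeled box strictly below `(i,j)` in column `j`. -/
def belowLabel (n : ℕ) (T : Fin n → Fin n → Option SLetter) (i j : Fin n) : Option SLetter :=
  List.findSome? (fun i' => T i' j) ((List.finRange n).drop ((i : ℕ) + 1))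

/-- Whether the (empty) box `(i,j)` receives a `q` in the weight of `T`:
an empty box seeing a `δ` to its right gets `q`; an empty box seeing an `α` or `γ` to
its right and a `β` or `γ` below it gets `q`; all other (empty) boxes get `1`. -/
def boxQ (n : ℕ) (T : Fin n → Fin n → Option SLetter) (i j : Fin n) : Bool :=
  match T i j with
  | some _ => false
  | none =>
    match rightLabel n T i j, belowLabel n T i j with
    | some SLetter.D, _ => true
    | some SLetter.A, some SLetter.B => true
    | some SLetter.A, some SLetter.G => true
    | some SLetter.G, some SLetter.B => true
    | some SLetter.G, some SLetter.G => true
    | _, _ => false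

/-- The exponent of `q` in the weight of `T`. -/
def qCount (n : ℕ) (T : Fin n → Fin n → Option SLetter) : ℕ :=
  (Finset.univ.filter (fun p : Fin n × Fin n => boxQ n T p.1 p.2 = true)).card

/-- The type of `T`, as a word in `Fin n → Bool`, read off the diagonal boxes from
northeast (index `0`) to southwest (index `n-1`): `true` (a `•`) for each `α` or `δ`,
`false` (a `∘`) for each `β` or `γ`. -/
def typeWord (n : ℕ) (T : Fin n → Fin n → Option SLetter) : Fin n → Bool := fun i =>
  match T i ⟨n - 1 - (i : ℕ), by have := i.isLt; omega⟩ with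
  | some SLetter.A => true
  | some SLetter.D => true
  | _ => false

/-- `t(T)`, the number of `•`'s in the type of `T`. -/
def bulletCount (n : ℕ) (T : Fin n → Fin n → Option SLetter) : ℕ :=
  (Finset.univ.filter (fun i : Fin n => typeWord n T i = true)).card

/-- The weight of a staircase tableau: the product of all its labels, with each empty
box contributing `q` or `1` according to the rules (`u` is set to `1`). -/
def stWt {R : Type*} [CommSemiring R] (n : ℕ) (a b g d q : R)
    (T : Fin n → Fin n → Option SLetter) : R :=
  a ^ countLetter n T SLetter.A * b ^ countLetter n T SLetter.B *
    g ^ countLetter n T SLetter.G * d ^ countLetter n T SLetter.D * q ^ qCount n T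

/-- The fugacity partition function `Z_n(y; α, β, γ, δ; q) = Σ_T wt(T) y^{t(T)}`,
summed over all staircase tableaux of size `n`. -/
def stZ (R : Type*) [CommSemiring R] (n : ℕ) (y a b g d q : R) : R :=
  ∑ T : StaircaseTableau n, stWt n a b g d q T.val * y ^ bulletCount n T.val

/-- The generating polynomial `Z_σ(α, β, γ, δ; q)` of staircase tableaux of a given
type `σ` (encoded as a list of booleans, `true` = `•`, `false` = `∘`). -/
def stZw (R : Type*) [CommSemiring R] (w : List Bool) (a b g d q : R) : R :=
  ∑ T ∈ Finset.univ.filter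
      (fun T : StaircaseTableau w.length => List.ofFn (typeWord w.length T.val) = w),
    stWt w.length a b g d q T.val


namespace StairAux

open Finset

abbrev Tab (n : ℕ) := Fin n → Fin n → Option SLetter
abbrev Col (n : ℕ) := Fin (n + 1) → Option SLetter

variable {R : Type*} [CommSemiring R]

def ow (a b g d : R) : Option SLetter → R
  | none => 1
  | some SLetter.A => a
  | some SLetter.B => b
  | some SLetter.G => g
  | some SLetter.D => d

def isAl : Option SLetter → Bool
  | some SLetter.A => true
  | some SLetter.G => true
  | _ => false

def isBl : Option SLetter → Bool
  | some SLetter.B => true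
  | some SLetter.D => true
  | _ => false

/-- first (leftmost) entry of row `i` -/
def rowFirst (n : ℕ) (T : Tab n) (i : Fin n) : Option SLetter :=
  List.findSome? (fun j => T i j) (List.finRange n)

def rowA (n : ℕ) (T : Tab n) (i : Fin n) : Bool := isAl (rowFirst n T i)

def wt4 (a b g d : R) (n : ℕ) (T : Tab n) : R :=
  ∏ i : Fin n, ∏ j : Fin n, ow a b g d (T i j)

/-- the refined partition function -/
def uF (a b g d u : R) (n : ℕ) : R :=
  ∑ T : Tab n,
    if IsStaircase n T then wt4 a b g d n T * ∏ i : Fin n, (if rowA n T i then u else 1) else 0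

/-! ### column machinery -/

def posw (a b g d u : R) (al : Bool) (o : Option SLetter) : R :=
  if al then ow a b g d o * (if isBl o then 1 else u)
  else if o = none then 1 else 0

def lastw (a b g d u : R) (o : Option SLetter) : R :=
  if o = none then 0 else ow a b g d o * (if isBl o then 1 else u)

def topOK (m : ℕ) (c : Fin m → Option SLetter) : Prop :=
  ∀ i' i : Fin m, i' < i → isAl (c i) = true → c i' = none

instance (m : ℕ) : DecidablePred (topOK m) := fun c => by unfold topOK; infer_instance

def noACol (m : ℕ) (c : Fin m → Option SLetter) : Prop := ∀ i, isAl (c i) = false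

instance (m : ℕ) : DecidablePred (noACol m) := fun c => by unfold noACol; infer_instance

def colw (a b g d u : R) (n : ℕ) (s : Fin n → Bool) (c : Col n) : R :=
  (if topOK (n + 1) c then 1 else 0) * lastw a b g d u (c (Fin.last n)) *
    ∏ i : Fin n, posw a b g d u (s i) (c i.castSucc)

def noAw (a b g d u : R) (n : ℕ) (s : Fin n → Bool) (c : Col n) : R :=
  (if noACol (n + 1) c then 1 else 0) * lastw a b g d u (c (Fin.last n)) *
    ∏ i : Fin n, posw a b g d u (s i) (c i.castSucc)

def colSum (a b g d u : R) (n : ℕ) (s : Fin n → Bool) : R := ∑ c : Col n, colw a b g d u n s c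

def noASum (a b g d u : R) (n : ℕ) (s : Fin n → Bool) : R := ∑ c : Col n, noAw a b g d u n s c

section ColSum

variable (a b g d u : R)

lemma sum_option (f : Option SLetter → R) :
    ∑ o : Option SLetter, f o
      = f none + (f (some .A) + f (some .B) + f (some .G) + f (some .D)) := by
  rw [Fintype.sum_option]
  congr 1
  show ∑ l : SLetter, f (some l) = _
  have h : (Finset.univ : Finset SLetter) = {SLetter.A, SLetter.B, SLetter.G, SLetter.D} := by
    decide
  rw [h]
  simp [Finset.sum_insert, Finset.mem_insert]
  ring

lemma sum_pi_succ (m : ℕ) (f : (Fin (m + 1) → Option SLetter) → R) :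
    ∑ c : Fin (m + 1) → Option SLetter, f c
      = ∑ o : Option SLetter, ∑ c' : Fin m → Option SLetter, f (Fin.cons o c') := by
  calc ∑ c : Fin (m + 1) → Option SLetter, f c
      = ∑ p : Option SLetter × (Fin m → Option SLetter), f (Fin.cons p.1 p.2) :=
        (Fintype.sum_equiv (Fin.consEquiv fun _ => Option SLetter)
          (fun p => f (Fin.cons p.1 p.2)) f (fun p => rfl)).symm
    _ = ∑ o : Option SLetter, ∑ c' : Fin m → Option SLetter, f (Fin.cons o c') :=
        Fintype.sum_prod_type _

lemma noACol_cons (m : ℕ) (o : Option SLetter) (c : Fin m → Option SLetter) :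
    noACol (m + 1) (Fin.cons o c) ↔ isAl o = false ∧ noACol m c := by
  unfold noACol
  rw [Fin.forall_fin_succ]
  simp [Fin.cons_succ, Fin.cons_zero]

lemma topOK_of_noACol (m : ℕ) (c : Fin m → Option SLetter) (h : noACol m c) : topOK m c := by
  intro i' i _ hA
  rw [h i] at hA
  exact absurd hA (by simp)

lemma topOK_cons (m : ℕ) (o : Option SLetter) (c : Fin m → Option SLetter) :
    topOK (m + 1) (Fin.cons o c) ↔ topOK m c ∧ (o = none ∨ noACol m c) := by
  constructor
  · intro h
    refine ⟨fun i' i hlt hA => ?_, ?_⟩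
    · have := h i'.succ i.succ (by simpa using hlt) (by simpa [Fin.cons_succ] using hA)
      simpa [Fin.cons_succ] using this
    · by_cases ho : o = none
      · exact Or.inl ho
      · right
        intro j
        by_contra hj
        have hj' : isAl (c j) = true := by
          cases hcj : isAl (c j) <;> simp_all
        have := h 0 j.succ (Fin.succ_pos j) (by simpa [Fin.cons_succ] using hj')
        rw [Fin.cons_zero] at this
        exact ho this
  · rintro ⟨h1, h2⟩ i' i hlt hA
    induction i using Fin.cases with
    | zero => exact absurd hlt (by simp)
    | succ k =>
      rw [Fin.cons_succ] at hA
      induction i' using Fin.cases with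
      | zero =>
        rw [Fin.cons_zero]
        rcases h2 with h2 | h2
        · exact h2
        · rw [h2 k] at hA; exact absurd hA (by simp)
      | succ k' =>
        rw [Fin.cons_succ]
        exact h1 k' k (by simpa [Fin.succ_lt_succ_iff] using hlt) hA

variable {n : ℕ}

lemma posw_none (al : Bool) : posw a b g d u al none = if al then u else 1 := by
  cases al <;> simp [posw, ow, isBl]

lemma posw_someA (al : Bool) : posw a b g d u al (some SLetter.A) = if al then a * u else 0 := by
  cases al <;> simp [posw, ow, isBl]

lemma posw_someB (al : Bool) : posw a b g d u al (some SLetter.B) = if al then b else 0 := by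
  cases al <;> simp [posw, ow, isBl]

lemma posw_someG (al : Bool) : posw a b g d u al (some SLetter.G) = if al then g * u else 0 := by
  cases al <;> simp [posw, ow, isBl]

lemma posw_someD (al : Bool) : posw a b g d u al (some SLetter.D) = if al then d else 0 := by
  cases al <;> simp [posw, ow, isBl]

lemma lastw_none : lastw a b g d u none = 0 := by simp [lastw]

lemma lastw_someA : lastw a b g d u (some SLetter.A) = a * u := by simp [lastw, ow, isBl]
lemma lastw_someB : lastw a b g d u (some SLetter.B) = b := by simp [lastw, ow, isBl]
lemma lastw_someG : lastw a b g d u (some SLetter.G) = g * u := by simp [lastw, ow, isBl]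
lemma lastw_someD : lastw a b g d u (some SLetter.D) = d := by simp [lastw, ow, isBl]

variable {n : ℕ}

lemma cons_last (o : Option SLetter) (c' : Col n) :
    (Fin.cons o c' : Col (n + 1)) (Fin.last (n + 1)) = c' (Fin.last n) := by
  rw [← Fin.succ_last, Fin.cons_succ]

lemma cons_prod (s : Fin (n + 1) → Bool) (o : Option SLetter) (c' : Col n) :
    ∏ i : Fin (n + 1), posw a b g d u (s i) ((Fin.cons o c' : Col (n + 1)) i.castSucc)
      = posw a b g d u (s 0) o *
        ∏ i : Fin n, posw a b g d u (s i.succ) (c' i.castSucc) := by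
  rw [Fin.prod_univ_succ, Fin.castSucc_zero, Fin.cons_zero]
  exact congrArg _ (Finset.prod_congr rfl fun i _ => by rw [← Fin.succ_castSucc, Fin.cons_succ])

lemma colw_cons_none (s : Fin (n + 1) → Bool) (c' : Col n) :
    colw a b g d u (n + 1) s (Fin.cons none c')
      = (if s 0 then u else 1) * colw a b g d u n (fun i => s i.succ) c' := by
  unfold colw
  rw [cons_last, cons_prod]
  have h1 : (if topOK (n + 2) (Fin.cons none c') then (1 : R) else 0)
      = if topOK (n + 1) c' then 1 else 0 := by
    simp only [topOK_cons]; simp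
  rw [h1, posw_none]; ring

lemma colw_cons_some (s : Fin (n + 1) → Bool) (l : SLetter) (c' : Col n) :
    colw a b g d u (n + 1) s (Fin.cons (some l) c')
      = posw a b g d u (s 0) (some l) * noAw a b g d u n (fun i => s i.succ) c' := by
  unfold colw noAw
  rw [cons_last, cons_prod]
  have h1 : (if topOK (n + 2) (Fin.cons (some l) c') then (1 : R) else 0)
      = if noACol (n + 1) c' then 1 else 0 := by
    by_cases h : noACol (n + 1) c'
    · simp [topOK_cons, h, topOK_of_noACol _ _ h]
    · simp [topOK_cons, h]
  rw [h1]; ring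

lemma noAw_cons_none (s : Fin (n + 1) → Bool) (c' : Col n) :
    noAw a b g d u (n + 1) s (Fin.cons none c')
      = (if s 0 then u else 1) * noAw a b g d u n (fun i => s i.succ) c' := by
  unfold noAw
  rw [cons_last, cons_prod]
  have h1 : (if noACol (n + 2) (Fin.cons none c') then (1 : R) else 0)
      = if noACol (n + 1) c' then 1 else 0 := by
    simp only [noACol_cons]; simp [isAl]
  rw [h1, posw_none]; ring

lemma noAw_cons_someA (s : Fin (n + 1) → Bool) (l : SLetter) (hl : isAl (some l) = true)
    (c' : Col n) : noAw a b g d u (n + 1) s (Fin.cons (some l) c') = 0 := by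
  unfold noAw
  have h1 : ¬ noACol (n + 2) (Fin.cons (some l) c') := by
    rw [noACol_cons]; simp [hl]
  rw [if_neg h1, zero_mul, zero_mul]

lemma noAw_cons_someB (s : Fin (n + 1) → Bool) (l : SLetter) (hl : isAl (some l) = false)
    (c' : Col n) :
    noAw a b g d u (n + 1) s (Fin.cons (some l) c')
      = posw a b g d u (s 0) (some l) * noAw a b g d u n (fun i => s i.succ) c' := by
  unfold noAw
  rw [cons_last, cons_prod]
  have h1 : (if noACol (n + 2) (Fin.cons (some l) c') then (1 : R) else 0)
      = if noACol (n + 1) c' then 1 else 0 := by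
    simp only [noACol_cons]; simp [hl]
  rw [h1]; ring

lemma sum_pi_one (f : (Fin 1 → Option SLetter) → R) :
    ∑ c : Fin 1 → Option SLetter, f c = ∑ o : Option SLetter, f (fun _ => o) :=
  (Fintype.sum_equiv (Equiv.funUnique (Fin 1) (Option SLetter)).symm
    (fun o => f (fun _ => o)) f (fun _ => rfl)).symm

lemma noASum_zero (s : Fin 0 → Bool) : noASum a b g d u 0 s = b + d := by
  unfold noASum
  rw [sum_pi_one, sum_option]
  have hno : ∀ o : Option SLetter, noACol 1 (fun _ => o) ↔ isAl o = false := by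
    intro o
    exact ⟨fun h => h 0, fun h i => h⟩
  unfold noAw
  simp only [Finset.univ_eq_empty, Finset.prod_empty, mul_one]
  simp [hno, lastw_none, lastw_someA, lastw_someB, lastw_someG, lastw_someD, isAl]

lemma colSum_zero (s : Fin 0 → Bool) : colSum a b g d u 0 s = a * u + g * u + (b + d) := by
  unfold colSum
  rw [sum_pi_one, sum_option]
  have htop : ∀ o : Option SLetter, topOK 1 (fun _ => o) := by
    intro o i' i hlt
    exact absurd hlt (by omega)
  unfold colw
  simp only [Finset.univ_eq_empty, Finset.prod_empty, mul_one]
  simp only [htop, if_true, one_mul, lastw_none, lastw_someA, lastw_someB, lastw_someG,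
    lastw_someD]
  ring

lemma noASum_succ (s : Fin (n + 1) → Bool) :
    noASum a b g d u (n + 1) s
      = (if s 0 then u + (b + d) else 1) * noASum a b g d u n (fun i => s i.succ) := by
  unfold noASum
  rw [sum_pi_succ, sum_option]
  simp only [noAw_cons_none, noAw_cons_someA a b g d u s SLetter.A rfl,
    noAw_cons_someA a b g d u s SLetter.G rfl, noAw_cons_someB a b g d u s SLetter.B rfl,
    noAw_cons_someB a b g d u s SLetter.D rfl, ← Finset.mul_sum, Finset.sum_const_zero,
    posw_someB, posw_someD]
  show _ + (_ + _ + _ + _)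
      = (if s 0 then u + (b + d) else 1) * ∑ c : Col n, noAw a b g d u n (fun i => s i.succ) c
  by_cases hs : s 0 <;> simp [hs] <;> ring

lemma colSum_succ (s : Fin (n + 1) → Bool) :
    colSum a b g d u (n + 1) s
      = (if s 0 then u else 1) * colSum a b g d u n (fun i => s i.succ)
        + (if s 0 then a * u + g * u + (b + d) else 0)
          * noASum a b g d u n (fun i => s i.succ) := by
  unfold colSum
  rw [sum_pi_succ, sum_option]
  simp only [colw_cons_none, colw_cons_some, ← Finset.mul_sum, posw_someA, posw_someB,
    posw_someG, posw_someD]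
  show _ + (_ + _ + _ + _)
      = (if s 0 then u else 1) * ∑ c : Col n, colw a b g d u n (fun i => s i.succ) c
        + (if s 0 then a * u + g * u + (b + d) else 0)
          * ∑ c : Col n, noAw a b g d u n (fun i => s i.succ) c
  by_cases hs : s 0 <;> simp [hs] <;> ring

lemma noASum_eq (s : Fin n → Bool) :
    noASum a b g d u n s = (b + d) * ∏ i : Fin n, (if s i then u + (b + d) else 1) := by
  induction n with
  | zero => simp [noASum_zero]
  | succ m ih =>
    rw [noASum_succ, ih, Fin.prod_univ_succ]
    ring

lemma colSum_eq (s : Fin n → Bool) :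
    colSum a b g d u n s
      = (a * u + g * u + (b + d)) * ∏ i : Fin n, (if s i then u + (b + d) else 1) := by
  induction n with
  | zero => simp [colSum_zero]
  | succ m ih =>
    rw [colSum_succ, ih, noASum_eq, Fin.prod_univ_succ]
    by_cases hs : s 0 <;> simp [hs] <;> ring

end ColSum

/-! ### glue / split -/

variable {n : ℕ}

def glue (n : ℕ) (T' : Tab n) (c : Col n) : Tab (n + 1) := fun i j =>
  if hj : (j : ℕ) = 0 then c i
  else if hi : (i : ℕ) < n then T' ⟨i, hi⟩ ⟨(j : ℕ) - 1, by have := j.isLt; omega⟩ else none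

def rest (T : Tab (n + 1)) : Tab n := fun i j => T i.castSucc j.succ

def fcol (T : Tab (n + 1)) : Col n := fun i => T i 0

lemma glue_zero (T' : Tab n) (c : Col n) (i : Fin (n + 1)) : glue n T' c i 0 = c i := by
  simp [glue]

lemma glue_castSucc_succ (T' : Tab n) (c : Col n) (i j : Fin n) :
    glue n T' c i.castSucc j.succ = T' i j := by
  unfold glue
  rw [dif_neg (by simp), dif_pos (by simpa using i.isLt)]
  congr 1 <;> exact Fin.ext (by simp)

lemma glue_last_succ (T' : Tab n) (c : Col n) (j : Fin n) :
    glue n T' c (Fin.last n) j.succ = none := by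
  unfold glue
  rw [dif_neg (by simp), dif_neg (by simp)]

lemma rest_glue (T' : Tab n) (c : Col n) : rest (glue n T' c) = T' :=
  funext fun i => funext fun j => glue_castSucc_succ T' c i j

lemma fcol_glue (T' : Tab n) (c : Col n) : fcol (glue n T' c) = c :=
  funext fun i => glue_zero T' c i

lemma glue_split {T : Tab (n + 1)} (hT : IsStaircase (n + 1) T) :
    glue n (rest T) (fcol T) = T := by
  funext i j
  induction j using Fin.cases with
  | zero => rw [glue_zero]; rfl
  | succ k =>
    induction i using Fin.lastCases with
    | last =>
      rw [glue_last_succ]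
      exact (hT.1 _ _ (by simp)).symm
    | cast i => rw [glue_castSucc_succ]; rfl

/-! ### rowFirst lemmas -/

lemma findSome?_finRange_eq {X : Type*} {n : ℕ} (f : Fin n → Option X) (j : Fin n)
    (h : f j ≠ none) (h2 : ∀ j', j' < j → f j' = none) :
    List.findSome? f (List.finRange n) = f j := by
  induction n with
  | zero => exact j.elim0
  | succ m ih =>
    rw [List.finRange_succ, List.findSome?_cons]
    induction j using Fin.cases with
    | zero =>
      cases hf : f 0 with
      | none => exact absurd hf h
      | some v => rfl
    | succ k =>
      rw [h2 0 (Fin.succ_pos k), List.findSome?_map]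
      exact ih (f ∘ Fin.succ) k h (fun j' hj' => h2 j'.succ (by simpa using hj'))

lemma rowFirst_glue_castSucc_some (T' : Tab n) (c : Col n) {v : SLetter} (i : Fin n)
    (h : c i.castSucc = some v) :
    rowFirst (n + 1) (glue n T' c) i.castSucc = some v := by
  unfold rowFirst
  rw [List.finRange_succ, List.findSome?_cons]
  have h0 : glue n T' c i.castSucc 0 = some v := by rw [glue_zero, h]
  rw [h0]

lemma rowFirst_glue_castSucc_none (T' : Tab n) (c : Col n) (i : Fin n)
    (h : c i.castSucc = none) :
    rowFirst (n + 1) (glue n T' c) i.castSucc = rowFirst n T' i := by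
  unfold rowFirst
  rw [List.finRange_succ, List.findSome?_cons]
  have h0 : glue n T' c i.castSucc 0 = none := by rw [glue_zero, h]
  rw [h0, List.findSome?_map]
  have he : ((fun j => glue n T' c i.castSucc j) ∘ Fin.succ) = fun j => T' i j :=
    funext fun j => glue_castSucc_succ T' c i j
  rw [he]

lemma rowFirst_glue_last (T' : Tab n) (c : Col n) (h : c (Fin.last n) ≠ none) :
    rowFirst (n + 1) (glue n T' c) (Fin.last n) = c (Fin.last n) := by
  cases hc : c (Fin.last n) with
  | none => exact absurd hc h
  | some v =>
    unfold rowFirst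
    rw [List.finRange_succ, List.findSome?_cons]
    have h0 : glue n T' c (Fin.last n) 0 = some v := by rw [glue_zero, hc]
    rw [h0]

lemma isAl_iff (o : Option SLetter) :
    isAl o = true ↔ o = some SLetter.A ∨ o = some SLetter.G := by
  cases o with
  | none => simp [isAl]
  | some l => cases l <;> simp [isAl]

lemma rowFirst_ne_none {T : Tab n} (hT : IsStaircase n T) (i : Fin n) :
    rowFirst n T i ≠ none := by
  intro hn
  rw [rowFirst, List.findSome?_eq_none_iff] at hn
  have hi := i.isLt
  exact hT.2.1 i ⟨n - 1 - (i : ℕ), by omega⟩ (by simp; omega) (hn _ (List.mem_finRange _))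

lemma exists_of_rowFirst {T : Tab n} {i : Fin n} {v : SLetter} (h : rowFirst n T i = some v) :
    ∃ j, T i j = some v := by
  rw [rowFirst] at h
  obtain ⟨l₁, x, l₂, _, hx, -⟩ := List.findSome?_eq_some_iff.mp h
  exact ⟨x, hx⟩

lemma rowA_false_of_B {T : Tab n} (hT : IsStaircase n T) {i j : Fin n}
    (hj : T i j = some SLetter.B ∨ T i j = some SLetter.D) : rowA n T i = false := by
  have h1 : rowFirst n T i = T i j :=
    findSome?_finRange_eq _ j (by rcases hj with h | h <;> simp [h])
      (fun j' hj' => hT.2.2.1 i j j' hj' hj)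
  rw [rowA, h1]
  rcases hj with h | h <;> rw [h] <;> rfl

lemma exists_B_of_rowA_false {T : Tab n} (hT : IsStaircase n T) {i : Fin n}
    (hA : rowA n T i = false) :
    ∃ j, T i j = some SLetter.B ∨ T i j = some SLetter.D := by
  cases hv : rowFirst n T i with
  | none => exact absurd hv (rowFirst_ne_none hT i)
  | some v =>
    rw [rowA, hv] at hA
    obtain ⟨j, hj⟩ := exists_of_rowFirst hv
    cases v with
    | A => simp [isAl] at hA
    | G => simp [isAl] at hA
    | B => exact ⟨j, Or.inl hj⟩
    | D => exact ⟨j, Or.inr hj⟩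

/-! ### the decomposition of staircase tableaux -/

def ColOK (n : ℕ) (T' : Tab n) (c : Col n) : Prop :=
  c (Fin.last n) ≠ none ∧ (∀ i : Fin n, rowA n T' i = false → c i.castSucc = none) ∧
    topOK (n + 1) c

instance (n : ℕ) (T' : Tab n) (c : Col n) : Decidable (ColOK n T' c) := by
  unfold ColOK; infer_instance

lemma rest_staircase {T : Tab (n + 1)} (hT : IsStaircase (n + 1) T) :
    IsStaircase n (rest T) := by
  refine ⟨fun i j h => hT.1 _ _ (by simp; omega),
    fun i j h => hT.2.1 _ _ (by simp; omega),
    fun i j j' hlt hBD => hT.2.2.1 i.castSucc j.succ j'.succ (by simpa using hlt) hBD,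
    fun i i' j hlt hAG => hT.2.2.2 i.castSucc i'.castSucc j.succ (by simpa using hlt) hAG⟩

lemma colOK_split {T : Tab (n + 1)} (hT : IsStaircase (n + 1) T) :
    ColOK n (rest T) (fcol T) := by
  refine ⟨hT.2.1 (Fin.last n) 0 (by simp), ?_, ?_⟩
  · intro i hA
    obtain ⟨j, hj⟩ := exists_B_of_rowA_false (rest_staircase hT) hA
    exact hT.2.2.1 i.castSucc j.succ 0 j.succ_pos hj
  · intro i' i hlt hA
    exact hT.2.2.2 i i' 0 hlt ((isAl_iff _).mp hA)

lemma glue_staircase {T' : Tab n} {c : Col n} (hT' : IsStaircase n T')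
    (hc : ColOK n T' c) : IsStaircase (n + 1) (glue n T' c) := by
  obtain ⟨hlast, hBrow, htop⟩ := hc
  refine ⟨?_, ?_, ?_, ?_⟩
  · intro i j h
    induction j using Fin.cases with
    | zero => exact absurd h (by have := i.isLt; simp only [Fin.val_zero]; omega)
    | succ k =>
      induction i using Fin.lastCases with
      | last => exact glue_last_succ T' c k
      | cast i =>
        rw [glue_castSucc_succ]
        exact hT'.1 i k (by simp only [Fin.coe_castSucc, Fin.val_succ] at h; omega)
  · intro i j h
    induction j using Fin.cases with
    | zero =>
      have hi : i = Fin.last n := Fin.ext (by simp at h ⊢; omega)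
      rw [glue_zero, hi]; exact hlast
    | succ k =>
      induction i using Fin.lastCases with
      | last => exact absurd h (by simp only [Fin.val_last, Fin.val_succ]; omega)
      | cast i =>
        rw [glue_castSucc_succ]
        exact hT'.2.1 i k (by simp only [Fin.coe_castSucc, Fin.val_succ] at h; omega)
  · intro i j j' hlt hBD
    induction j using Fin.cases with
    | zero => exact absurd hlt (by simp)
    | succ k =>
      induction i using Fin.lastCases with
      | last => rw [glue_last_succ] at hBD; rcases hBD with h | h <;> simp_all
      | cast i =>
        rw [glue_castSucc_succ] at hBD
        induction j' using Fin.cases with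
        | zero =>
          rw [glue_zero]
          exact hBrow i (rowA_false_of_B hT' hBD)
        | succ k' =>
          rw [glue_castSucc_succ]
          exact hT'.2.2.1 i k k' (by simpa using hlt) hBD
  · intro i i' j hlt hAG
    induction j using Fin.cases with
    | zero =>
      rw [glue_zero] at hAG ⊢
      exact htop i' i hlt ((isAl_iff _).mpr hAG)
    | succ k =>
      have hi : (i : ℕ) < n := by
        by_contra hni
        have hieq : i = Fin.last n := Fin.ext (by have := i.isLt; simp; omega)
        rw [hieq, glue_last_succ] at hAG
        rcases hAG with h | h <;> simp_all
      have hieq : i = (⟨(i : ℕ), hi⟩ : Fin n).castSucc := Fin.ext rfl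
      rw [hieq, glue_castSucc_succ] at hAG
      have hi' : (i' : ℕ) < n := by have := hlt; omega
      have hieq' : i' = (⟨(i' : ℕ), hi'⟩ : Fin n).castSucc := Fin.ext rfl
      rw [hieq', glue_castSucc_succ]
      exact hT'.2.2.2 ⟨(i : ℕ), hi⟩ ⟨(i' : ℕ), hi'⟩ k (by simpa using hlt) hAG

/-! ### weights of glued tableaux -/

section Weights

variable (a b g d u : R)

lemma wt4_glue (T' : Tab n) (c : Col n) :
    wt4 a b g d (n + 1) (glue n T' c)
      = (∏ i : Fin (n + 1), ow a b g d (c i)) * wt4 a b g d n T' := by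
  unfold wt4
  calc ∏ i : Fin (n + 1), ∏ j : Fin (n + 1), ow a b g d (glue n T' c i j)
      = ∏ i : Fin (n + 1), (ow a b g d (c i) * ∏ j : Fin n, ow a b g d (glue n T' c i j.succ)) := by
        refine Finset.prod_congr rfl fun i _ => ?_
        rw [Fin.prod_univ_succ, glue_zero]
    _ = (∏ i : Fin (n + 1), ow a b g d (c i))
          * ∏ i : Fin (n + 1), ∏ j : Fin n, ow a b g d (glue n T' c i j.succ) :=
        Finset.prod_mul_distrib
    _ = (∏ i : Fin (n + 1), ow a b g d (c i)) * ∏ i : Fin n, ∏ j : Fin n, ow a b g d (T' i j) := by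
        congr 1
        rw [Fin.prod_univ_castSucc]
        have h1 : ∏ j : Fin n, ow a b g d (glue n T' c (Fin.last n) j.succ) = 1 :=
          Finset.prod_eq_one fun j _ => by rw [glue_last_succ]; rfl
        rw [h1, mul_one]
        exact Finset.prod_congr rfl fun i _ => Finset.prod_congr rfl fun j _ => by
          rw [glue_castSucc_succ]

lemma rowA_glue_castSucc_none (T' : Tab n) (c : Col n) (i : Fin n) (h : c i.castSucc = none) :
    rowA (n + 1) (glue n T' c) i.castSucc = rowA n T' i := by
  rw [rowA, rowFirst_glue_castSucc_none T' c i h]; rfl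

lemma rowA_glue_castSucc_some (T' : Tab n) (c : Col n) {v : SLetter} (i : Fin n)
    (h : c i.castSucc = some v) :
    rowA (n + 1) (glue n T' c) i.castSucc = isAl (some v) := by
  rw [rowA, rowFirst_glue_castSucc_some T' c i h]

lemma rowA_glue_last (T' : Tab n) (c : Col n) (h : c (Fin.last n) ≠ none) :
    rowA (n + 1) (glue n T' c) (Fin.last n) = isAl (c (Fin.last n)) := by
  rw [rowA, rowFirst_glue_last T' c h]

lemma key_pointwise {T' : Tab n} (hT' : IsStaircase n T') (c : Col n) :
    (if ColOK n T' c then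
        wt4 a b g d (n + 1) (glue n T' c)
          * ∏ i : Fin (n + 1), (if rowA (n + 1) (glue n T' c) i then u else 1)
      else 0)
    = wt4 a b g d n T' * colw a b g d u n (rowA n T') c := by
  by_cases h : ColOK n T' c
  · obtain ⟨h1, h2, h3⟩ := h
    rw [if_pos ⟨h1, h2, h3⟩, wt4_glue]
    unfold colw
    rw [if_pos h3, one_mul]
    have hlastfac : ow a b g d (c (Fin.last n))
        * (if rowA (n + 1) (glue n T' c) (Fin.last n) then u else 1)
        = lastw a b g d u (c (Fin.last n)) := by
      rw [rowA_glue_last T' c h1]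
      cases hc : c (Fin.last n) with
      | none => exact absurd hc h1
      | some l => cases l <;> simp [ow, lastw, isBl, isAl]
    have hmid : ∀ i : Fin n, ow a b g d (c i.castSucc)
        * (if rowA (n + 1) (glue n T' c) i.castSucc then u else 1)
        = posw a b g d u (rowA n T' i) (c i.castSucc) := by
      intro i
      cases hc : c i.castSucc with
      | none =>
        rw [rowA_glue_castSucc_none T' c i hc, posw_none]
        simp [ow]
      | some l =>
        have hAl : rowA n T' i = true := by
          cases hA : rowA n T' i
          · exact absurd (h2 i hA) (by simp [hc])
          · rfl
        rw [rowA_glue_castSucc_some T' c i hc, hAl]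
        cases l <;> simp [ow, posw, isAl, isBl]
    have h4 : (∏ i : Fin (n + 1), ow a b g d (c i))
        * ∏ i : Fin (n + 1), (if rowA (n + 1) (glue n T' c) i then u else 1)
        = lastw a b g d u (c (Fin.last n))
            * ∏ i : Fin n, posw a b g d u (rowA n T' i) (c i.castSucc) := by
      rw [← Finset.prod_mul_distrib, Fin.prod_univ_castSucc]
      rw [hlastfac, Finset.prod_congr rfl fun i _ => hmid i]
      ring
    calc (∏ i : Fin (n + 1), ow a b g d (c i)) * wt4 a b g d n T'
          * ∏ i : Fin (n + 1), (if rowA (n + 1) (glue n T' c) i then u else 1)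
        = wt4 a b g d n T' * ((∏ i : Fin (n + 1), ow a b g d (c i))
            * ∏ i : Fin (n + 1), (if rowA (n + 1) (glue n T' c) i then u else 1)) := by ring
      _ = _ := by rw [h4]
  · rw [if_neg h]
    have hz : colw a b g d u n (rowA n T') c = 0 := by
      by_cases h3 : topOK (n + 1) c
      · by_cases h1 : c (Fin.last n) = none
        · unfold colw
          rw [h1, lastw_none]
          ring
        · have h2 : ¬ (∀ i : Fin n, rowA n T' i = false → c i.castSucc = none) := by
            intro h2
            exact h ⟨h1, h2, h3⟩
          push_neg at h2
          obtain ⟨i, hAi, hci⟩ := h2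
          unfold colw
          have hp : posw a b g d u (rowA n T' i) (c i.castSucc) = 0 := by
            rw [hAi]
            cases hc : c i.castSucc with
            | none => exact absurd hc hci
            | some l => simp [posw]
          rw [Finset.prod_eq_zero (Finset.mem_univ i) hp]
          ring
      · unfold colw
        rw [if_neg h3]
        ring
    rw [hz, mul_zero]

lemma inner_sum {T' : Tab n} (hT' : IsStaircase n T') :
    (∑ c : Col n, if ColOK n T' c then
        wt4 a b g d (n + 1) (glue n T' c)
          * ∏ i : Fin (n + 1), (if rowA (n + 1) (glue n T' c) i then u else 1)
      else 0)
    = wt4 a b g d n T'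
        * ((a * u + g * u + (b + d)) * ∏ i : Fin n, (if rowA n T' i then u + (b + d) else 1)) := by
  rw [Finset.sum_congr rfl fun c _ => key_pointwise a b g d u hT' c, ← Finset.mul_sum]
  congr 1
  exact colSum_eq a b g d u (rowA n T')

lemma uF_succ : uF a b g d u (n + 1) = (a * u + g * u + (b + d)) * uF a b g d (u + (b + d)) n := by
  unfold uF
  rw [← Finset.sum_filter]
  rw [Finset.sum_nbij' (fun T => ((rest T, fcol T) : Tab n × Col n))
    (fun p : Tab n × Col n => glue n p.1 p.2)
    (t := Finset.univ.filter (fun p : Tab n × Col n => IsStaircase n p.1 ∧ ColOK n p.1 p.2))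
    (g := fun p : Tab n × Col n => wt4 a b g d (n + 1) (glue n p.1 p.2)
      * ∏ i : Fin (n + 1), (if rowA (n + 1) (glue n p.1 p.2) i then u else 1))
    (fun T hT => by
      rw [Finset.mem_filter] at hT ⊢
      exact ⟨Finset.mem_univ _, rest_staircase hT.2, colOK_split hT.2⟩)
    (fun p hp => by
      rw [Finset.mem_filter] at hp ⊢
      exact ⟨Finset.mem_univ _, glue_staircase hp.2.1 hp.2.2⟩)
    (fun T hT => glue_split (Finset.mem_filter.mp hT).2)
    (fun p hp => by rw [Prod.ext_iff]; exact ⟨rest_glue p.1 p.2, fcol_glue p.1 p.2⟩)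
    (fun T hT => by simp only [glue_split (Finset.mem_filter.mp hT).2])]
  rw [Finset.sum_filter, Fintype.sum_prod_type, Finset.mul_sum]
  refine Finset.sum_congr rfl fun T' _ => ?_
  by_cases hT' : IsStaircase n T'
  · simp only [hT', true_and, if_true]
    rw [inner_sum a b g d u hT']
    ring
  · simp [hT']

lemma uF_zero : uF a b g d u 0 = 1 := by
  unfold uF
  have h1 : ∀ T : Tab 0,
      (if IsStaircase 0 T then wt4 a b g d 0 T * ∏ i : Fin 0, (if rowA 0 T i then u else 1)
        else 0) = 1 := by
    intro T
    rw [if_pos ⟨fun i => i.elim0, fun i => i.elim0, fun i => i.elim0, fun i => i.elim0⟩]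
    simp [wt4]
  rw [Finset.sum_congr rfl fun T _ => h1 T, Finset.sum_const, Finset.card_univ]
  simp

lemma uF_eq (n : ℕ) : ∀ u : R,
    uF a b g d u n = ∏ j ∈ Finset.range n, ((a + g) * (u + (j : R) * (b + d)) + (b + d)) := by
  induction n with
  | zero => intro u; simp [uF_zero]
  | succ m ih =>
    intro u
    rw [uF_succ, ih (u + (b + d)), Finset.prod_range_succ', mul_comm]
    congr 1
    · refine Finset.prod_congr rfl fun j _ => ?_
      push_cast
      ring
    · push_cast
      ring

end Weights


lemma wt4_eq (a b g d : R) (n : ℕ) (T : Tab n) :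
    wt4 a b g d n T = a ^ countLetter n T SLetter.A * b ^ countLetter n T SLetter.B
      * g ^ countLetter n T SLetter.G * d ^ countLetter n T SLetter.D := by
  have h0 : wt4 a b g d n T = ∏ p : Fin n × Fin n, ow a b g d (T p.1 p.2) := by
    unfold wt4
    exact (Fintype.prod_prod_type fun p : Fin n × Fin n => ow a b g d (T p.1 p.2)).symm
  rw [h0, ← Finset.prod_fiberwise_of_maps_to (g := fun p : Fin n × Fin n => T p.1 p.2)
    (t := (Finset.univ : Finset (Option SLetter))) (fun x _ => Finset.mem_univ _)]
  have hfib : ∀ v ∈ (Finset.univ : Finset (Option SLetter)),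
      (∏ p ∈ Finset.univ.filter (fun p : Fin n × Fin n => T p.1 p.2 = v), ow a b g d (T p.1 p.2))
        = ow a b g d v ^ (Finset.univ.filter (fun p : Fin n × Fin n => T p.1 p.2 = v)).card := by
    intro v _
    rw [Finset.prod_congr rfl (fun p hp => by rw [(Finset.mem_filter.mp hp).2]),
      Finset.prod_const]
  rw [Finset.prod_congr rfl hfib, Fintype.prod_option]
  unfold countLetter
  have huniv : (Finset.univ : Finset SLetter)
      = {SLetter.A, SLetter.B, SLetter.G, SLetter.D} := by decide
  rw [huniv, Finset.prod_insert (by decide), Finset.prod_insert (by decide),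
    Finset.prod_insert (by decide), Finset.prod_singleton]
  simp only [ow, one_pow, one_mul]
  ring

lemma stZ_one_one (a b g d : R) (n : ℕ) : stZ R n 1 a b g d 1 = uF a b g d 1 n := by
  unfold stZ uF
  rw [show (∑ T : StaircaseTableau n, stWt n a b g d 1 T.val * (1 : R) ^ bulletCount n T.val)
      = ∑ T ∈ Finset.univ.filter (IsStaircase n), stWt n a b g d 1 T * 1 ^ bulletCount n T from
    (Finset.sum_subtype (Finset.univ.filter (IsStaircase n))
      (fun x => by simp only [Finset.mem_filter, Finset.mem_univ, true_and])
      (fun T => stWt n a b g d 1 T * (1 : R) ^ bulletCount n T)).symm]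
  rw [Finset.sum_filter]
  refine Finset.sum_congr rfl fun T _ => ?_
  by_cases hT : IsStaircase n T
  · rw [if_pos hT, if_pos hT]
    unfold stWt
    rw [wt4_eq]
    simp
  · rw [if_neg hT, if_neg hT]


end StairAux

open MvPolynomial in
/-- For every positive integer `n`, the fugacity partition function of staircase tableaux
at `q = 1`, `y = 1` factors as
`Z_n(1; α, β, γ, δ; 1) = ∏_{j=0}^{n-1} (α + β + γ + δ + j(α+γ)(β+δ))` in `ℤ[α, β, γ, δ]`. -/
theorem staircase_partition_q_one (n : ℕ) (hn : 1 ≤ n) :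
    stZ (MvPolynomial (Fin 4) ℤ) n 1 (X 0) (X 1) (X 2) (X 3) 1 =
      ∏ j ∈ Finset.range n,
        (X 0 + X 1 + X 2 + X 3 + (j : MvPolynomial (Fin 4) ℤ) * ((X 0 + X 2) * (X 1 + X 3))) := by
  rw [StairAux.stZ_one_one, StairAux.uF_eq]
  refine Finset.prod_congr rfl fun j _ => ?_
  ring
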